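/- The map G is continuous with respect to the sup norm: for any two states s and o with ‖s − o‖_∞ ≤ ε, one has |G_{k,i}(s) − G_{k,i}(o)| ≤ (1 + 2x_cλ/μ + 2x_cλ·k_max/(k̄·μ))·ε for all k ∈ K and i ≥ 1. -/

import Mathlib

open Finset Filter

/-- `zfun K p kbar s k i` is the quantity `z_{k,i+1}(s)` of the graph mean field model:
`(1/2) * Σ_{k'∈K} ((k'+k)/k̄) p(k') (s_{k',i} + s_{k',i+1})`. -/
noncomputable def zfun (K : Finset ℕ) (p : ℕ → ℝ) (kbar : ℝ) (s : ℕ → ℕ → ℝ) (k i : ℕ) : ℝ :=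
  (1/2) * ∑ k' ∈ K, (((k' : ℝ) + (k : ℝ)) / kbar) * p k' * (s k' i + s k' (i+1))

/-- Continuity of the fixed-point map `G` in the sup norm. -/
theorem G_continuous (K : Finset ℕ) (p : ℕ → ℝ)
    (hp : ∀ k ∈ K, 0 ≤ p k) (hpsum : ∑ k ∈ K, p k = 1)
    (kbar : ℝ) (hkbar : kbar = ∑ k ∈ K, p k * (k : ℝ)) (hkpos : 0 < kbar)
    (kmax : ℕ) (hkmaxmem : kmax ∈ K) (hkmax : ∀ k ∈ K, k ≤ kmax)
    (xcl mu : ℝ) (hx : 0 < xcl) (hmu : 0 < mu)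
    (s o : ℕ → ℕ → ℝ)
    (hs0 : ∀ k, s k 0 = 1) (hsmono : ∀ k i, s k (i+1) ≤ s k i)
    (hsnn : ∀ k i, 0 ≤ s k i) (hsle1 : ∀ k i, s k i ≤ 1)
    (ho0 : ∀ k, o k 0 = 1) (homono : ∀ k i, o k (i+1) ≤ o k i)
    (honn : ∀ k i, 0 ≤ o k i) (hole1 : ∀ k i, o k i ≤ 1)
    (eps : ℝ) (heps : 0 ≤ eps) (hclose : ∀ k i, |s k i - o k i| ≤ eps)
    (Gs Go : ℕ → ℕ → ℝ)
    (hGs : ∀ k ∈ K, ∀ i : ℕ,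
      xcl * Gs k i * zfun K p kbar s k i + mu * Gs k i
        = xcl * s k i * zfun K p kbar s k i + mu * s k (i+2))
    (hGo : ∀ k ∈ K, ∀ i : ℕ,
      xcl * Go k i * zfun K p kbar o k i + mu * Go k i
        = xcl * o k i * zfun K p kbar o k i + mu * o k (i+2)) :
    ∀ k ∈ K, ∀ i : ℕ,
      |Gs k i - Go k i| ≤ (1 + 2 * xcl / mu + 2 * xcl * (kmax : ℝ) / (kbar * mu)) * eps := by

  intro k hk i
  set zs := zfun K p kbar s k i with hzsdef
  set zo := zfun K p kbar o k i with hzodef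
  clear_value zs zo
  -- nonnegativity of z's
  have hcnn : ∀ k' ∈ K, 0 ≤ (((k' : ℝ) + (k : ℝ)) / kbar) * p k' := by
    intro k' hk'
    apply mul_nonneg
    · apply div_nonneg (by positivity) hkpos.le
    · exact hp k' hk'
  have hzs_nn : 0 ≤ zs := by
    rw [hzsdef, zfun]
    apply mul_nonneg (by norm_num)
    apply Finset.sum_nonneg
    intro k' hk'
    exact mul_nonneg (hcnn k' hk') (by have := hsnn k' i; have := hsnn k' (i+1); linarith)
  have hzo_nn : 0 ≤ zo := by
    rw [hzodef, zfun]
    apply mul_nonneg (by norm_num)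
    apply Finset.sum_nonneg
    intro k' hk'
    exact mul_nonneg (hcnn k' hk') (by have := honn k' i; have := honn k' (i+1); linarith)
  -- sum of coefficients
  have hsum : ∑ k' ∈ K, (((k' : ℝ) + (k : ℝ)) / kbar) * p k' = 1 + (k : ℝ) / kbar := by
    have h1 : ∑ k' ∈ K, (((k' : ℝ) + (k : ℝ)) / kbar) * p k'
        = (∑ k' ∈ K, (p k' * (k' : ℝ) + (k : ℝ) * p k')) / kbar := by
      rw [Finset.sum_div]
      apply Finset.sum_congr rfl
      intro k' _
      field_simp
    rw [h1, Finset.sum_add_distrib, ← Finset.mul_sum, hpsum, ← hkbar]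
    field_simp
  -- bound on |zs - zo|
  have hzsub : zs - zo = (1/2) * ∑ k' ∈ K, (((k' : ℝ) + (k : ℝ)) / kbar) * p k' *
      ((s k' i - o k' i) + (s k' (i+1) - o k' (i+1))) := by
    rw [hzsdef, hzodef, zfun, zfun, ← mul_sub, ← Finset.sum_sub_distrib]
    congr 1
    apply Finset.sum_congr rfl
    intro k' _
    ring
  have hzd : |zs - zo| ≤ eps * (1 + (kmax : ℝ) / kbar) := by
    have hterm : ∀ k' ∈ K, |(((k' : ℝ) + (k : ℝ)) / kbar) * p k' *
        ((s k' i - o k' i) + (s k' (i+1) - o k' (i+1)))|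
        ≤ (((k' : ℝ) + (k : ℝ)) / kbar) * p k' * (2 * eps) := by
      intro k' hk'
      rw [abs_mul, abs_of_nonneg (hcnn k' hk')]
      apply mul_le_mul_of_nonneg_left _ (hcnn k' hk')
      calc |(s k' i - o k' i) + (s k' (i+1) - o k' (i+1))|
          ≤ |s k' i - o k' i| + |s k' (i+1) - o k' (i+1)| := abs_add_le _ _
        _ ≤ 2 * eps := by have := hclose k' i; have := hclose k' (i+1); linarith
    calc |zs - zo| = (1/2) * |∑ k' ∈ K, (((k' : ℝ) + (k : ℝ)) / kbar) * p k' *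
          ((s k' i - o k' i) + (s k' (i+1) - o k' (i+1)))| := by
          rw [hzsub, abs_mul]; norm_num
      _ ≤ (1/2) * ∑ k' ∈ K, (((k' : ℝ) + (k : ℝ)) / kbar) * p k' * (2 * eps) := by
          apply mul_le_mul_of_nonneg_left _ (by norm_num)
          exact (Finset.abs_sum_le_sum_abs _ _).trans (Finset.sum_le_sum hterm)
      _ = eps * (1 + (k : ℝ) / kbar) := by
          rw [← Finset.sum_mul, hsum]; ring
      _ ≤ eps * (1 + (kmax : ℝ) / kbar) := by
          have hkk : (k : ℝ) ≤ (kmax : ℝ) := Nat.cast_le.mpr (hkmax k hk)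
          have hdd : (k : ℝ) / kbar ≤ (kmax : ℝ) / kbar :=
            div_le_div_of_nonneg_right hkk hkpos.le
          exact mul_le_mul_of_nonneg_left (by linarith) heps
  -- denominators
  set Ds := xcl * zs + mu with hDsdef
  set Do := xcl * zo + mu with hDodef
  clear_value Ds Do
  have hDs_pos : 0 < Ds := by
    have := mul_nonneg hx.le hzs_nn; rw [hDsdef]; linarith
  have hDo_pos : 0 < Do := by
    have := mul_nonneg hx.le hzo_nn; rw [hDodef]; linarith
  have hDs_ge : mu ≤ Ds := by
    have := mul_nonneg hx.le hzs_nn; rw [hDsdef]; linarith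
  have hDo_ge : mu ≤ Do := by
    have := mul_nonneg hx.le hzo_nn; rw [hDodef]; linarith
  -- key identity
  have hGsEq : Gs k i * Ds = xcl * s k i * zs + mu * s k (i+2) := by
    have h := hGs k hk i
    rw [← hzsdef] at h
    rw [hDsdef]; linear_combination h
  have hGoEq : Go k i * Do = xcl * o k i * zo + mu * o k (i+2) := by
    have h := hGo k hk i
    rw [← hzodef] at h
    rw [hDodef]; linear_combination h
  have key : (Gs k i - Go k i) * (Ds * Do)
      = (s k i - o k i) * (xcl * zs * Do) + (s k (i+2) - o k (i+2)) * (mu * Do)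
        + mu * (o k i - o k (i+2)) * xcl * (zs - zo) := by
    rw [hDsdef] at hGsEq ⊢
    rw [hDodef] at hGoEq ⊢
    linear_combination (xcl * zo + mu) * hGsEq - (xcl * zs + mu) * hGoEq
  -- bound on o k i - o k (i+2)
  have hob : 0 ≤ o k i - o k (i+2) ∧ o k i - o k (i+2) ≤ 1 := by
    constructor
    · have h1 := homono k i; have h2 := homono k (i+1); linarith
    · have := honn k (i+2); have := hole1 k i; linarith
  -- bound the RHS of key
  have habs : |Gs k i - Go k i| * (Ds * Do)
      ≤ eps * (xcl * zs * Do) + eps * (mu * Do)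
        + mu * xcl * (eps * (1 + (kmax : ℝ) / kbar)) := by
    have h0 : |Gs k i - Go k i| * (Ds * Do) = |(Gs k i - Go k i) * (Ds * Do)| := by
      rw [abs_mul, abs_of_pos (mul_pos hDs_pos hDo_pos)]
    rw [h0, key]
    have t1 : |(s k i - o k i) * (xcl * zs * Do)| ≤ eps * (xcl * zs * Do) := by
      rw [abs_mul, abs_of_nonneg (by positivity : (0:ℝ) ≤ xcl * zs * Do)]
      exact mul_le_mul_of_nonneg_right (hclose k i) (by positivity)
    have t2 : |(s k (i+2) - o k (i+2)) * (mu * Do)| ≤ eps * (mu * Do) := by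
      rw [abs_mul, abs_of_nonneg (by positivity : (0:ℝ) ≤ mu * Do)]
      exact mul_le_mul_of_nonneg_right (hclose k (i+2)) (by positivity)
    have t3 : |mu * (o k i - o k (i+2)) * xcl * (zs - zo)|
        ≤ mu * xcl * (eps * (1 + (kmax : ℝ) / kbar)) := by
      rw [abs_mul]
      have h4 : |mu * (o k i - o k (i+2)) * xcl| ≤ mu * xcl := by
        have hnn : (0:ℝ) ≤ mu * (o k i - o k (i+2)) * xcl :=
          mul_nonneg (mul_nonneg hmu.le hob.1) hx.le
        rw [abs_of_nonneg hnn]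
        calc mu * (o k i - o k (i+2)) * xcl
            = (mu * xcl) * (o k i - o k (i+2)) := by ring
          _ ≤ (mu * xcl) * 1 := mul_le_mul_of_nonneg_left hob.2 (by positivity)
          _ = mu * xcl := by ring
      exact mul_le_mul h4 hzd (abs_nonneg _) (by positivity)
    have ha1 := abs_add_le ((s k i - o k i) * (xcl * zs * Do) +
      (s k (i+2) - o k (i+2)) * (mu * Do)) (mu * (o k i - o k (i+2)) * xcl * (zs - zo))
    have ha2 := abs_add_le ((s k i - o k i) * (xcl * zs * Do))
      ((s k (i+2) - o k (i+2)) * (mu * Do))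
    linarith [t1, t2, t3]
  -- conclude
  have hfinal : eps * (xcl * zs * Do) + eps * (mu * Do)
      + mu * xcl * (eps * (1 + (kmax : ℝ) / kbar))
      ≤ (1 + 2 * xcl / mu + 2 * xcl * (kmax : ℝ) / (kbar * mu)) * eps * (Ds * Do) := by
    have hkm : (0:ℝ) ≤ (kmax : ℝ) := Nat.cast_nonneg _
    have h1 : eps * (xcl * zs * Do) + eps * (mu * Do) = eps * (Ds * Do) := by
      rw [hDsdef]; ring
    have h2 : mu * xcl * (eps * (1 + (kmax : ℝ) / kbar))
        ≤ (2 * xcl / mu + 2 * xcl * (kmax : ℝ) / (kbar * mu)) * eps * (Ds * Do) := by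
      have e1 : (2 * xcl / mu + 2 * xcl * (kmax : ℝ) / (kbar * mu)) * eps * (mu * mu)
          = 2 * (mu * xcl * (eps * (1 + (kmax : ℝ) / kbar))) := by
        field_simp
      have e2 : (2 * xcl / mu + 2 * xcl * (kmax : ℝ) / (kbar * mu)) * eps * (mu * mu)
          ≤ (2 * xcl / mu + 2 * xcl * (kmax : ℝ) / (kbar * mu)) * eps * (Ds * Do) := by
        apply mul_le_mul_of_nonneg_left _ (by positivity)
        exact mul_le_mul hDs_ge hDo_ge hmu.le (by linarith)
      linarith [mul_nonneg (mul_nonneg hmu.le hx.le)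
        (mul_nonneg heps (by positivity : (0:ℝ) ≤ 1 + (kmax : ℝ) / kbar))]
    have h3 : (1 + 2 * xcl / mu + 2 * xcl * (kmax : ℝ) / (kbar * mu)) * eps * (Ds * Do)
        = eps * (Ds * Do) + (2 * xcl / mu + 2 * xcl * (kmax : ℝ) / (kbar * mu)) * eps * (Ds * Do) := by
      ring
    linarith [h1, h2]
  have := habs.trans hfinal
  exact le_of_mul_le_mul_right (by linarith) (mul_pos hDs_pos hDo_pos)
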